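/- If C is a continuous c-tree on positions 1,…,L, then for every head h the weak order on M_h induced by the head-ordered dependency projection (modifiers attaching at lower nodes of h's spine precede modifiers attaching at higher nodes) satisfies the nesting property: whenever m_i, m_j ∈ M_h satisfy h < m_i < m_j or h > m_i > m_j, the modifier m_i attaches at a node of h's spine that is not higher than the node at which m_j attaches. -/

import Mathlib

/-- A node of a constituent tree: either a pre-terminal over position `i`
(standing for the pre-terminal `(p_i, i, {i})` together with its leaf child `i`),
or a proper node `node Z h cs` with label `Z`, lexical head `h` and children `cs`. -/
inductive CNode (L : ℕ) (Sg : Type) : Type where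
  | pre  : Fin L → CNode L Sg
  | node : Sg → Fin L → List (CNode L Sg) → CNode L Sg

namespace CNode

variable {L : ℕ} {Sg : Type}

/-- The lexical head of a node. -/
def head : CNode L Sg → Fin L
  | pre i => i
  | node _ h _ => h

mutual
  /-- The yield of a node. -/
  def yield : CNode L Sg → Finset (Fin L)
    | pre i => {i}
    | node _ _ cs => yieldList cs
  def yieldList : List (CNode L Sg) → Finset (Fin L)
    | [] => ∅
    | c :: cs => yield c ∪ yieldList cs
end

mutual
  /-- The list of all subtrees (nodes) of a tree, including itself. -/
  def subs : CNode L Sg → List (CNode L Sg)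
    | pre i => [pre i]
    | node Z h cs => node Z h cs :: subsList cs
  def subsList : List (CNode L Sg) → List (CNode L Sg)
    | [] => []
    | c :: cs => subs c ++ subsList cs
end

/-- Well-formedness of a c-tree: children have pairwise disjoint yields and
every proper node has exactly one child whose head is the node's head. -/
inductive Valid : CNode L Sg → Prop where
  | pre (i : Fin L) : Valid (pre i)
  | node (Z : Sg) (h : Fin L) (cs : List (CNode L Sg)) :
      (∀ c ∈ cs, Valid c) →
      cs.Pairwise (fun a b => Disjoint a.yield b.yield) →
      (∃! c, c ∈ cs ∧ head c = h) →
      Valid (node Z h cs)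

/-- A c-tree on positions `1,…,L`: a well-formed tree whose leaves are exactly
the `L` positions, each appearing exactly once. -/
def IsCTree (t : CNode L Sg) : Prop := Valid t ∧ t.yield = Finset.univ

/-- Every proper node has exactly two children. -/
def Binary (t : CNode L Sg) : Prop :=
  ∀ s ∈ t.subs, ∀ Z h cs, s = node Z h cs → cs.length = 2

/-- No proper node has exactly one child. -/
def Unaryless (t : CNode L Sg) : Prop :=
  ∀ s ∈ t.subs, ∀ Z h cs, s = node Z h cs → cs.length ≠ 1

/-- Every node's yield is an interval of consecutive positions. -/
def Continuous (t : CNode L Sg) : Prop :=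
  ∀ s ∈ t.subs, ∃ a b : Fin L, s.yield = Finset.Icc a b

/-- `AttachesAt C h m Z n`: `n` is a proper node of `C` with label `Z` and lexical
head `h`, having a (non-head) child whose lexical head is `m ≠ h`;
i.e. the modifier `m` attaches to `h` at the spine node `n`, generating an arc
`(h, m)` labeled `Z`. -/
def AttachesAt (C : CNode L Sg) (h m : Fin L) (Z : Sg) (n : CNode L Sg) : Prop :=
  n ∈ C.subs ∧ ∃ cs, n = node Z h cs ∧ m ≠ h ∧ ∃ c ∈ cs, head c = m

/-- A proper node with head `h` having at least one non-head child
(i.e. a node of `h`'s spine at which some modifier attaches). -/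
def attachB (h : Fin L) : CNode L Sg → Bool
  | pre _ => false
  | node _ h' cs => h' = h && cs.any (fun c => head c != h)

/-- The position, counted from the bottom of the spine of `h`, of the spine node `n`:
the number of proper nodes with head `h` lying weakly below `n` at which modifiers
attach.  This is the order index (`#1, #2, …`) of the attachment event at `n`. -/
def spineIdx (h : Fin L) (n : CNode L Sg) : ℕ :=
  n.subs.countP (attachB h)

end CNode

namespace CNode

variable {L : ℕ} {Sg : Type}

theorem mem_subs_self (t : CNode L Sg) : t ∈ t.subs := by
  cases t <;> simp [subs]

theorem mem_subsList {s : CNode L Sg} : ∀ {cs : List (CNode L Sg)},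
    s ∈ subsList cs ↔ ∃ c ∈ cs, s ∈ c.subs
  | [] => by simp [subsList]
  | c :: cs => by
      simp [subsList, List.mem_append, mem_subsList (cs := cs)]

theorem mem_yieldList {x : Fin L} : ∀ {cs : List (CNode L Sg)},
    x ∈ yieldList cs ↔ ∃ c ∈ cs, x ∈ c.yield
  | [] => by simp [yieldList]
  | c :: cs => by
      simp [yieldList, Finset.mem_union, mem_yieldList (cs := cs)]

theorem yield_subset : ∀ (t s : CNode L Sg), s ∈ t.subs → s.yield ⊆ t.yield
  | pre i, s, hs => by
      simp [subs] at hs; subst hs; exact subset_rfl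
  | node Z h cs, s, hs => by
      rw [subs, List.mem_cons] at hs
      rcases hs with rfl | hs
      · exact subset_rfl
      · rcases mem_subsList.1 hs with ⟨c, hc, hsc⟩
        have := List.sizeOf_lt_of_mem hc
        refine (yield_subset c s hsc).trans ?_
        intro x hx
        rw [yield]
        exact mem_yieldList.2 ⟨c, hc, hx⟩
termination_by t => sizeOf t
decreasing_by simp_wf; omega

theorem subs_trans : ∀ (u t s : CNode L Sg), s ∈ t.subs → t ∈ u.subs → s ∈ u.subs
  | pre i, t, s, hst, htu => by
      simp [subs] at htu; subst htu; simpa [subs] using hst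
  | node Z h cs, t, s, hst, htu => by
      rw [subs, List.mem_cons] at htu
      rcases htu with rfl | htu
      · exact hst
      · rcases mem_subsList.1 htu with ⟨c, hc, htc⟩
        have := List.sizeOf_lt_of_mem hc
        rw [subs, List.mem_cons]
        exact Or.inr (mem_subsList.2 ⟨c, hc, subs_trans c t s hst htc⟩)
termination_by u => sizeOf u
decreasing_by simp_wf; omega

theorem valid_of_mem_subs {t : CNode L Sg} (hv : Valid t) :
    ∀ s ∈ t.subs, Valid s := by
  induction hv with
  | pre i =>
      intro s hs; simp [subs] at hs; subst hs; exact Valid.pre i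
  | node Z h cs hall hdisj huniq ih =>
      intro s hs
      rw [subs, List.mem_cons] at hs
      rcases hs with rfl | hs
      · exact Valid.node Z h cs hall hdisj huniq
      · rcases mem_subsList.1 hs with ⟨c, hc, hsc⟩
        exact ih c hc s hsc

theorem head_mem_yield {t : CNode L Sg} (hv : Valid t) : t.head ∈ t.yield := by
  induction hv with
  | pre i => simp [head, yield]
  | node Z h cs hall hdisj huniq ih =>
      rcases huniq with ⟨c, ⟨hc, hch⟩, _⟩
      have : h ∈ c.yield := by have := ih c hc; rwa [hch] at this
      rw [yield, head]
      exact mem_yieldList.2 ⟨c, hc, this⟩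

theorem pairwise_disjoint_eq {cs : List (CNode L Sg)}
    (hdisj : cs.Pairwise (fun a b => Disjoint a.yield b.yield))
    {c c' : CNode L Sg} (hc : c ∈ cs) (hc' : c' ∈ cs)
    (hnd : ¬ Disjoint c.yield c'.yield) : c = c' := by
  by_contra hne
  haveI : Std.Symm (fun a b : CNode L Sg => Disjoint a.yield b.yield) := ⟨fun _ _ h => h.symm⟩
  exact hnd (List.Pairwise.forall hdisj hc hc' hne)

theorem valid_node_elim {Z : Sg} {h : Fin L} {cs : List (CNode L Sg)}
    (hv : Valid (node Z h cs)) :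
    (∀ c ∈ cs, Valid c) ∧ cs.Pairwise (fun a b => Disjoint a.yield b.yield) ∧
      (∃! c, c ∈ cs ∧ head c = h) := by
  cases hv with
  | node _ _ _ hall hdisj huniq => exact ⟨hall, hdisj, huniq⟩

theorem comparable {t : CNode L Sg} (hv : Valid t) :
    ∀ s ∈ t.subs, ∀ s' ∈ t.subs, ¬ Disjoint s.yield s'.yield →
      s ∈ s'.subs ∨ s' ∈ s.subs := by
  induction hv with
  | pre i =>
      intro s hs s' hs' _
      simp [subs] at hs hs'; subst hs; subst hs'
      exact Or.inl (mem_subs_self _)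
  | node Z h cs hall hdisj huniq ih =>
      intro s hs s' hs' hnd
      rw [subs, List.mem_cons] at hs hs'
      rcases hs' with rfl | hs'
      · left
        rcases hs with rfl | hs
        · exact mem_subs_self _
        · rw [subs]; exact List.mem_cons_of_mem _ hs
      rcases hs with rfl | hs
      · right; rw [subs]; exact List.mem_cons_of_mem _ hs'
      · rcases mem_subsList.1 hs with ⟨c, hc, hsc⟩
        rcases mem_subsList.1 hs' with ⟨c', hc', hsc'⟩
        have hcc : c = c' := by
          refine pairwise_disjoint_eq hdisj hc hc' (fun hd => hnd ?_)
          exact hd.mono (yield_subset c s hsc) (yield_subset c' s' hsc')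
        subst hcc
        exact ih c hc s hsc s' hsc' hnd

end CNode

/-- If `C` is a continuous c-tree, then for every head `h` the weak
order on `M_h` induced by the head-ordered dependency projection satisfies the
nesting property: whenever modifiers `m, m'` of `h` (attaching at spine nodes `n, n'`
of `h` respectively) satisfy `h < m < m'` or `h > m > m'`, the node `n` at which `m`
attaches is not higher than the node `n'` at which `m'` attaches, i.e. `n` lies
(weakly) below `n'` in the tree. -/
theorem stmt5 (L : ℕ) (Sg P : Type) (pos : Fin L → P)
    (C : CNode L Sg) (hC : CNode.IsCTree C) (hcont : CNode.Continuous C)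
    (h m m' : Fin L) (Z Z' : Sg) (n n' : CNode L Sg)
    (hm : CNode.AttachesAt C h m Z n) (hm' : CNode.AttachesAt C h m' Z' n')
    (hord : (h < m ∧ m < m') ∨ (m' < m ∧ m < h)) :
    n ∈ n'.subs := by
  obtain ⟨hnC, cs, rfl, hmh, cm, hcm, hcmh⟩ := hm
  obtain ⟨hn'C, cs', rfl, hm'h, cm', hcm', hcm'h⟩ := hm'
  -- validity
  obtain ⟨hvC, -⟩ := hC
  have hvn : CNode.Valid (CNode.node Z h cs) := CNode.valid_of_mem_subs hvC _ hnC
  have hvn' : CNode.Valid (CNode.node Z' h cs') := CNode.valid_of_mem_subs hvC _ hn'C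
  obtain ⟨hall, hdisj, huniq⟩ := CNode.valid_node_elim hvn
  obtain ⟨hall', hdisj', huniq'⟩ := CNode.valid_node_elim hvn'
  -- h is in both yields
  have hhyn : h ∈ (CNode.node Z h cs).yield :=
    CNode.head_mem_yield (CNode.Valid.node Z h cs hall hdisj huniq)
  have hhyn' : h ∈ (CNode.node Z' h cs').yield :=
    CNode.head_mem_yield (CNode.Valid.node Z' h cs' hall' hdisj' huniq')
  have hcomp := CNode.comparable hvC _ hnC _ hn'C
    (Finset.not_disjoint_iff.2 ⟨h, hhyn, hhyn'⟩)
  rcases hcomp with hc | hc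
  · exact hc
  -- otherwise n' is a strict subtree of n; derive a contradiction
  rw [CNode.subs, List.mem_cons] at hc
  rcases hc with heq | hc
  · rw [heq]; exact CNode.mem_subs_self _
  exfalso
  obtain ⟨c, hcmem, hn'c⟩ := CNode.mem_subsList.1 hc
  -- h and m' are in the yield of c
  have hsub : (CNode.node Z' h cs').yield ⊆ c.yield := CNode.yield_subset c _ hn'c
  have hhc : h ∈ c.yield := hsub hhyn'
  have hm'n' : m' ∈ (CNode.node Z' h cs').yield := by
    have hv : CNode.Valid cm' := hall' cm' hcm'
    have : m' ∈ cm'.yield := by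
      have := CNode.head_mem_yield hv; rwa [hcm'h] at this
    rw [CNode.yield]
    exact CNode.mem_yieldList.2 ⟨cm', hcm', this⟩
  have hm'c : m' ∈ c.yield := hsub hm'n'
  -- m is in the yield of cm
  have hmcm : m ∈ cm.yield := by
    have := CNode.head_mem_yield (hall cm hcm); rwa [hcmh] at this
  -- h is not in the yield of cm
  have hhcm : h ∉ cm.yield := by
    intro hhin
    obtain ⟨ch, ⟨hchmem, hchh⟩, -⟩ := huniq
    have hhch : h ∈ ch.yield := by
      have := CNode.head_mem_yield (hall ch hchmem); rwa [hchh] at this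
    have : cm = ch := CNode.pairwise_disjoint_eq hdisj hcm hchmem
      (Finset.not_disjoint_iff.2 ⟨h, hhin, hhch⟩)
    rw [this, hchh] at hcmh
    exact hmh hcmh.symm
  -- hence c ≠ cm, so their yields are disjoint and m ∉ yield c
  have hne : c ≠ cm := fun he => hhcm (he ▸ hhc)
  have hdj : Disjoint c.yield cm.yield := by
    by_contra hnd
    exact hne (CNode.pairwise_disjoint_eq hdisj hcmem hcm hnd)
  have hmnc : m ∉ c.yield := fun hmc =>
    (Finset.disjoint_left.1 hdj hmc) hmcm
  -- c is a node of C, so its yield is an interval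
  have hcC : c ∈ C.subs := by
    refine CNode.subs_trans C (CNode.node Z h cs) c ?_ hnC
    rw [CNode.subs, List.mem_cons]
    exact Or.inr (CNode.mem_subsList.2 ⟨c, hcmem, CNode.mem_subs_self c⟩)
  obtain ⟨a, b, hab⟩ := hcont c hcC
  rw [hab, Finset.mem_Icc] at hhc hm'c
  apply hmnc
  rw [hab, Finset.mem_Icc]
  rcases hord with ⟨h1, h2⟩ | ⟨h1, h2⟩
  · exact ⟨le_trans hhc.1 (le_of_lt h1), le_trans (le_of_lt h2) hm'c.2⟩
  · exact ⟨le_trans hm'c.1 (le_of_lt h1), le_trans (le_of_lt h2) hhc.2⟩
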